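/- Let A, S ∈ M_m(ℂ) and S_ε ∈ M_m(ℂ) with S self-adjoint, SA self-adjoint, and S_ε self-adjoint with λ·Id ≤ S_ε ≤ Λ·Id. Then for every u ∈ ℂ^m, |Re(−i·S_ε A u · u)| ≤ (1/λ)·‖S_ε − S‖·‖A‖·(S_ε u·u). -/

import Mathlib

noncomputable section
open Matrix MeasureTheory

attribute [local instance] Matrix.frobeniusNormedAddCommGroup Matrix.frobeniusNormedSpace

/-- Operator norm (ℓ²→ℓ²) of a complex matrix. -/
def opNorm {m : ℕ} (A : Matrix (Fin m) (Fin m) ℂ) : ℝ :=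
  ‖Matrix.toEuclideanCLM (𝕜 := ℂ) A‖

/-- Hermitian pairing `Su · v = ∑ (Su)_j conj(v_j)`. -/
def sip {m : ℕ} (S : Matrix (Fin m) (Fin m) ℂ) (u v : Fin m → ℂ) : ℂ :=
  S.mulVec u ⬝ᵥ star v

/-- Squared Euclidean norm of a complex vector. -/
def enormSq {m : ℕ} (u : Fin m → ℂ) : ℝ := ∑ i, ‖u i‖ ^ 2

/-- Euclidean norm of a complex vector. -/
def evnorm {m : ℕ} (u : Fin m → ℂ) : ℝ := Real.sqrt (enormSq u)

namespace Stmt15Aux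

def ι {m : ℕ} (u : Fin m → ℂ) : EuclideanSpace ℂ (Fin m) := (WithLp.equiv 2 _).symm u

lemma sip_eq_inner {m : ℕ} (M : Matrix (Fin m) (Fin m) ℂ) (u v : Fin m → ℂ) :
    sip M u v = @inner ℂ _ _ (ι v) (ι (M.mulVec u)) := by
  simp [sip, dotProduct, PiLp.inner_apply, RCLike.inner_apply, ι, mul_comm]

lemma norm_ι {m : ℕ} (u : Fin m → ℂ) : ‖ι u‖ = evnorm u := by
  rw [ι, EuclideanSpace.norm_eq]
  simp [evnorm, enormSq]

lemma sip_bound {m : ℕ} (M : Matrix (Fin m) (Fin m) ℂ) (u v : Fin m → ℂ) :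
    ‖sip M u v‖ ≤ opNorm M * (evnorm u * evnorm v) := by
  rw [sip_eq_inner]
  have h1 : ‖@inner ℂ _ _ (ι v) (ι (M.mulVec u))‖ ≤ ‖ι v‖ * ‖ι (M.mulVec u)‖ :=
    norm_inner_le_norm _ _
  have h2 : ι (M.mulVec u) = Matrix.toEuclideanCLM (𝕜 := ℂ) M (ι u) := by
    rfl
  have h3 : ‖ι (M.mulVec u)‖ ≤ opNorm M * ‖ι u‖ := by
    rw [h2]; exact (Matrix.toEuclideanCLM (𝕜 := ℂ) M).le_opNorm _
  calc ‖@inner ℂ _ _ (ι v) (ι (M.mulVec u))‖ ≤ ‖ι v‖ * (opNorm M * ‖ι u‖) :=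
        h1.trans (by gcongr)
    _ = opNorm M * (evnorm u * evnorm v) := by rw [norm_ι, norm_ι]; ring

lemma sip_real {m : ℕ} {M : Matrix (Fin m) (Fin m) ℂ} (h : M.IsHermitian)
    (u : Fin m → ℂ) : (sip M u u).im = 0 := by
  have hs : star (sip M u u) = sip M u u := by
    unfold sip
    calc star (M.mulVec u ⬝ᵥ star u) = star (star u) ⬝ᵥ star (M.mulVec u) :=
          (star_dotProduct_star _ _).symm
      _ = u ⬝ᵥ (star u ᵥ* Mᴴ) := by rw [star_star, star_mulVec]
      _ = u ⬝ᵥ (star u ᵥ* M) := by rw [h.eq]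
      _ = (star u ᵥ* M) ⬝ᵥ u := dotProduct_comm _ _
      _ = star u ⬝ᵥ M.mulVec u := (dotProduct_mulVec _ _ _).symm
      _ = M.mulVec u ⬝ᵥ star u := dotProduct_comm _ _
  have h2 : -(sip M u u).im = (sip M u u).im := by
    simpa [Complex.conj_im] using congrArg Complex.im hs
  linarith

lemma opNorm_mul_le {m : ℕ} (M N : Matrix (Fin m) (Fin m) ℂ) :
    opNorm (M * N) ≤ opNorm M * opNorm N := by
  unfold opNorm
  rw [_root_.map_mul]
  exact norm_mul_le _ _

end Stmt15Aux

theorem stmt15 {m : ℕ} (S Sε A : Matrix (Fin m) (Fin m) ℂ) (lam Lam : ℝ)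
    (hlam : 0 < lam) (hle : lam ≤ Lam)
    (hS : S.IsHermitian) (hSA : (S * A).IsHermitian) (hSε : Sε.IsHermitian)
    (hquad : ∀ w : Fin m → ℂ,
      lam * enormSq w ≤ (sip Sε w w).re ∧ (sip Sε w w).re ≤ Lam * enormSq w) :
    ∀ u : Fin m → ℂ,
      |((-Complex.I) * sip (Sε * A) u u).re| ≤
        (1 / lam) * opNorm (Sε - S) * opNorm A * (sip Sε u u).re := by
  intro u
  have hdecomp : sip (Sε * A) u u = sip ((Sε - S) * A) u u + sip (S * A) u u := by
    have hm : Sε * A = (Sε - S) * A + S * A := by noncomm_ring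
    rw [hm]
    simp [sip, Matrix.add_mulVec, add_dotProduct]
  have hre : ((-Complex.I) * sip (Sε * A) u u).re = (sip ((Sε - S) * A) u u).im := by
    rw [hdecomp]
    have h1 : (sip (S * A) u u).im = 0 := Stmt15Aux.sip_real hSA u
    simp [Complex.mul_re, h1]
  have hnormSq : 0 ≤ enormSq u := Finset.sum_nonneg fun i _ => by positivity
  have hbd : |(sip ((Sε - S) * A) u u).im| ≤ opNorm (Sε - S) * opNorm A * enormSq u := by
    calc |(sip ((Sε - S) * A) u u).im| ≤ ‖sip ((Sε - S) * A) u u‖ :=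
          Complex.abs_im_le_norm _
      _ ≤ opNorm ((Sε - S) * A) * (evnorm u * evnorm u) := Stmt15Aux.sip_bound _ _ _
      _ = opNorm ((Sε - S) * A) * enormSq u := by
          rw [evnorm, Real.mul_self_sqrt hnormSq]
      _ ≤ opNorm (Sε - S) * opNorm A * enormSq u := by
          gcongr
          exact Stmt15Aux.opNorm_mul_le _ _
  have hquad1 : enormSq u ≤ (1 / lam) * (sip Sε u u).re := by
    rw [div_mul_eq_mul_div, one_mul, le_div_iff₀ hlam, mul_comm]
    exact (hquad u).1
  have hop : 0 ≤ opNorm (Sε - S) * opNorm A :=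
    mul_nonneg (norm_nonneg _) (norm_nonneg _)
  calc |((-Complex.I) * sip (Sε * A) u u).re|
      = |(sip ((Sε - S) * A) u u).im| := by rw [hre]
    _ ≤ opNorm (Sε - S) * opNorm A * enormSq u := hbd
    _ ≤ opNorm (Sε - S) * opNorm A * ((1 / lam) * (sip Sε u u).re) := by
        exact mul_le_mul_of_nonneg_left hquad1 hop
    _ = (1 / lam) * opNorm (Sε - S) * opNorm A * (sip Sε u u).re := by ring
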